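/- Given completely positive maps A (trace-preserving) and E (trace-nonincreasing) and a density operator ρ, there exist operator decompositions {Aᵢ} of A and {Eⱼ} of E such that F_e(ρ, A∘E) ≤ |tr(A₁E₁ρ)|² / tr(E₁ρE₁†). -/

import Mathlib

open Matrix

lemma traceBB {d : ℕ} (B : Matrix (Fin d) (Fin d) ℂ) :
    (B * Bᴴ).trace = ((∑ i, ∑ k, Complex.normSq (B i k) : ℝ) : ℂ) := by
  simp only [Matrix.trace, Matrix.diag, Matrix.mul_apply, Matrix.conjTranspose_apply,
    RCLike.star_def, Complex.mul_conj]
  push_cast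
  rfl

lemma sumsq_zero {d : ℕ} {B : Matrix (Fin d) (Fin d) ℂ}
    (h : (∑ i, ∑ k, Complex.normSq (B i k)) = 0) : B = 0 := by
  ext i k
  have h1 := (Finset.sum_eq_zero_iff_of_nonneg (fun i _ => Finset.sum_nonneg
    (fun k _ => Complex.normSq_nonneg _))).mp h i (Finset.mem_univ i)
  have h2 := (Finset.sum_eq_zero_iff_of_nonneg (fun k _ => Complex.normSq_nonneg _)).mp h1 k
    (Finset.mem_univ k)
  simpa using Complex.normSq_eq_zero.mp h2

-- unitary mixing lemma
lemma mixA {d p : ℕ} (A : Fin (p + 1) → Matrix (Fin d) (Fin d) ℂ)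
    (M : Matrix (Fin (p+1)) (Fin (p+1)) ℂ) (hM : Mᴴ * M = 1)
    (X : Matrix (Fin d) (Fin d) ℂ) :
    ∑ i, (∑ k, M i k • A k) * X * (∑ k, M i k • A k)ᴴ = ∑ i, A i * X * (A i)ᴴ := by
  have step : ∀ i, (∑ k, M i k • A k) * X * (∑ k, M i k • A k)ᴴ
      = ∑ k, ∑ l, (M i k * star (M i l)) • (A k * X * (A l)ᴴ) := by
    intro i
    rw [conjTranspose_sum]
    rw [Finset.sum_mul, Finset.sum_mul]
    refine Finset.sum_congr rfl fun k _ => ?_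
    rw [Finset.mul_sum]
    refine Finset.sum_congr rfl fun l _ => ?_
    rw [conjTranspose_smul, smul_mul_assoc, smul_mul_assoc, mul_smul_comm, smul_smul]
  simp only [step]
  rw [Finset.sum_comm]
  refine Finset.sum_congr rfl fun k _ => ?_
  rw [Finset.sum_comm]
  have : ∀ l, ∑ i, (M i k * star (M i l)) • (A k * X * (A l)ᴴ)
      = ((Mᴴ * M) l k) • (A k * X * (A l)ᴴ) := by
    intro l
    rw [← Finset.sum_smul]
    congr 1
    rw [Matrix.mul_apply]
    refine Finset.sum_congr rfl fun i _ => ?_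
    rw [Matrix.conjTranspose_apply, mul_comm]
  simp only [this, hM, Matrix.one_apply]
  simp [ite_smul]

lemma exists_unitary_row {p : ℕ} (w : EuclideanSpace ℂ (Fin (p+1))) (hw : ‖w‖ = 1) :
    ∃ M : Matrix (Fin (p+1)) (Fin (p+1)) ℂ, Mᴴ * M = 1 ∧ ∀ k, M 0 k = w k := by
  have hcard : Module.finrank ℂ (EuclideanSpace ℂ (Fin (p+1))) = Fintype.card (Fin (p+1)) := by
    simp [finrank_euclideanSpace]
  have horth : Orthonormal ℂ (({0} : Set (Fin (p+1))).restrict (fun _ => w)) := by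
    constructor
    · intro i; exact hw
    · intro i j hij
      exact absurd (Subsingleton.elim i j) hij
  obtain ⟨b, hb⟩ := horth.exists_orthonormalBasis_extension_of_card_eq hcard
  refine ⟨Matrix.of (fun i k => b i k), ?_, ?_⟩
  · rw [mul_eq_one_comm]
    ext i j
    rw [Matrix.mul_apply, Matrix.one_apply]
    have horr := b.orthonormal
    rw [orthonormal_iff_ite] at horr
    have h2 := horr j i
    simp only [PiLp.inner_apply, RCLike.inner_apply] at h2
    calc ∑ k, Matrix.of (fun i k => b i k) i k * (Matrix.of (fun i k => b i k))ᴴ k j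
        = ∑ k, (starRingEnd ℂ) (b j k) * b i k := by
          refine Finset.sum_congr rfl fun k _ => ?_
          rw [Matrix.conjTranspose_apply]
          simp [mul_comm]
      _ = if j = i then 1 else 0 := by
          rw [← h2]; exact Finset.sum_congr rfl fun k _ => mul_comm _ _
      _ = if i = j then 1 else 0 := by simp [eq_comm]
  · intro k
    have := hb 0 (by simp)
    simp [this]

open scoped ComplexOrder in
/-- Given a trace-preserving completely positive map `A` and a trace-nonincreasing
completely positive map `E` with `tr(E(ρ)) = 1` for a density operator `ρ`, there exist
operator decompositions `{A'ᵢ}` of `A` and `{E'ⱼ}` of `E` such that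
`F_e(ρ, A∘E) ≤ |tr(A'₁E'₁ρ)|² / tr(E'₁ρE'₁ᴴ)`. -/
theorem stmt_17 {d p q : ℕ}
    (A : Fin (p + 1) → Matrix (Fin d) (Fin d) ℂ)
    (E : Fin (q + 1) → Matrix (Fin d) (Fin d) ℂ)
    (hA : ∑ i, (A i)ᴴ * A i = 1)
    (hE : (1 - ∑ j, (E j)ᴴ * E j).PosSemidef)
    (ρ : Matrix (Fin d) (Fin d) ℂ) (hρ : ρ.PosSemidef) (htr : ρ.trace = 1)
    (hEρ : (∑ j, E j * ρ * (E j)ᴴ).trace = 1) :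
    ∃ (A' : Fin (p + 1) → Matrix (Fin d) (Fin d) ℂ)
      (E' : Fin (q + 1) → Matrix (Fin d) (Fin d) ℂ),
      (∀ X, ∑ i, A' i * X * (A' i)ᴴ = ∑ i, A i * X * (A i)ᴴ) ∧
      (∀ X, ∑ j, E' j * X * (E' j)ᴴ = ∑ j, E j * X * (E j)ᴴ) ∧
      ∑ i, ∑ j, ‖(A i * E j * ρ).trace‖ ^ 2 ≤
        ‖(A' 0 * E' 0 * ρ).trace‖ ^ 2 / ((E' 0 * ρ * (E' 0)ᴴ).trace).re := by
  classical
  set s2 : Matrix (Fin d) (Fin d) ℂ := (open scoped MatrixOrder in CFC.sqrt ρ) with hs2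
  have hs2H : s2ᴴ = s2 := (open scoped MatrixOrder in (CFC.sqrt_nonneg ρ).posSemidef.1)
  have hs2mul : s2 * s2 = ρ := (open scoped MatrixOrder in CFC.sqrt_mul_sqrt_self ρ hρ.nonneg)
  set B : Fin (q+1) → Matrix (Fin d) (Fin d) ℂ := fun j => E j * s2 with hB
  have hform : ∀ j, E j * ρ * (E j)ᴴ = B j * (B j)ᴴ := by
    intro j
    simp only [hB, Matrix.conjTranspose_mul, hs2H, ← hs2mul]
    noncomm_ring
  set lam : Fin (q+1) → ℝ := fun j => ((E j * ρ * (E j)ᴴ).trace).re with hlam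
  have hlam_eq : ∀ j, lam j = ∑ i, ∑ k, Complex.normSq (B j i k) := by
    intro j
    simp only [hlam, hform j, traceBB]
    simp
  have hlam_nonneg : ∀ j, 0 ≤ lam j := fun j => by
    rw [hlam_eq]
    exact Finset.sum_nonneg fun i _ => Finset.sum_nonneg fun k _ => Complex.normSq_nonneg _
  have hlam_sum : ∑ j, lam j = 1 := by
    have h1 : ((∑ j, E j * ρ * (E j)ᴴ).trace).re = 1 := by rw [hEρ]; simp
    rw [Matrix.trace_sum] at h1
    rw [← h1, Complex.re_sum]
  set sV : Fin (q+1) → ℝ := fun j => ∑ i, ‖(A i * E j * ρ).trace‖ ^ 2 with hsV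
  have hsV_nonneg : ∀ j, 0 ≤ sV j := fun j => Finset.sum_nonneg fun i _ => pow_nonneg (norm_nonneg _) 2
  set S : ℝ := ∑ j, sV j with hS
  have hS_nonneg : 0 ≤ S := Finset.sum_nonneg fun j _ => hsV_nonneg j
  have hzero : ∀ j, lam j = 0 → sV j = 0 := by
    intro j hj
    have hBj : B j = 0 := sumsq_zero (by rw [← hlam_eq]; exact hj)
    have hEρ0 : E j * ρ = 0 := by
      have hEs : E j * s2 = 0 := hBj
      rw [← hs2mul, ← Matrix.mul_assoc, hEs, Matrix.zero_mul]
    simp only [hsV]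
    apply Finset.sum_eq_zero; intro i _
    rw [Matrix.mul_assoc, hEρ0, Matrix.mul_zero, Matrix.trace_zero]
    simp
  obtain ⟨j₀, hj₀pos, hj₀⟩ : ∃ j, 0 < lam j ∧ lam j * S ≤ sV j := by
    by_contra hcon
    push_neg at hcon
    obtain ⟨j₁, hj₁⟩ : ∃ j, 0 < lam j := by
      by_contra hno; push_neg at hno
      have hall : ∀ j, lam j = 0 := fun j => le_antisymm (hno j) (hlam_nonneg j)
      rw [Finset.sum_congr rfl fun j _ => hall j] at hlam_sum
      simp at hlam_sum
    have hlt : S < S := by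
      calc S = ∑ j, sV j := hS
        _ < ∑ j, lam j * S := by
            apply Finset.sum_lt_sum
            · intro j _
              rcases (hlam_nonneg j).lt_or_eq with h | h
              · exact (hcon j h).le
              · have h0 : lam j = 0 := h.symm
                rw [hzero j h0, h0, zero_mul]
            · exact ⟨j₁, Finset.mem_univ _, hcon j₁ hj₁⟩
        _ = S := by rw [← Finset.sum_mul, hlam_sum, one_mul]
    exact lt_irrefl _ hlt
  set v : Fin (p+1) → ℂ := fun i => (A i * E j₀ * ρ).trace with hv
  have hsj₀ : sV j₀ = ∑ i, ‖v i‖ ^ 2 := rfl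
  set σ := Equiv.swap (0 : Fin (q+1)) j₀ with hσ
  set E' : Fin (q+1) → Matrix (Fin d) (Fin d) ℂ := fun j => E (σ j) with hE'
  have hE'chan : ∀ X, ∑ j, E' j * X * (E' j)ᴴ = ∑ j, E j * X * (E j)ᴴ := fun X =>
    Fintype.sum_equiv σ _ _ (fun j => rfl)
  have hE'0 : E' 0 = E j₀ := by simp only [hE', hσ, Equiv.swap_apply_left]
  have hLHS : ∑ i, ∑ j, ‖(A i * E j * ρ).trace‖ ^ 2 = S := by
    rw [hS]; simp only [hsV]; rw [Finset.sum_comm]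
  by_cases hv0 : v = 0
  · refine ⟨A, E', fun X => rfl, hE'chan, ?_⟩
    have hS0 : S = 0 := by
      have hsj0 : sV j₀ = 0 := by rw [hsj₀, hv0]; simp
      have h1 : lam j₀ * S ≤ 0 := by rw [← hsj0]; exact hj₀
      nlinarith
    rw [hLHS, hS0]
    apply div_nonneg (by positivity)
    rw [hE'0]
    exact hlam_nonneg j₀
  · set vE : EuclideanSpace ℂ (Fin (p+1)) := WithLp.toLp 2 (fun i => (starRingEnd ℂ) (v i)) with hvE
    have hvE0 : vE ≠ 0 := by
      intro h; apply hv0; funext i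
      have h2 := congrArg (fun x : EuclideanSpace ℂ (Fin (p+1)) => x i) h
      simpa [hvE] using h2
    set n : ℝ := ‖vE‖ with hn
    have hnpos : 0 < n := norm_pos_iff.mpr hvE0
    set w : EuclideanSpace ℂ (Fin (p+1)) := (n : ℂ)⁻¹ • vE with hw
    have hwnorm : ‖w‖ = 1 := by
      rw [hw, norm_smul, ← hn]
      simp [hnpos.ne', abs_of_pos hnpos]
    obtain ⟨M, hM, hM0⟩ := exists_unitary_row w hwnorm
    set A' : Fin (p+1) → Matrix (Fin d) (Fin d) ℂ := fun i => ∑ k, M i k • A k with hA'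
    refine ⟨A', E', fun X => mixA A M hM X, hE'chan, ?_⟩
    have hn2 : n ^ 2 = ∑ i, ‖v i‖ ^ 2 := by
      rw [hn, EuclideanSpace.norm_eq, Real.sq_sqrt (by positivity)]
      refine Finset.sum_congr rfl fun i _ => ?_
      simp [hvE]
    have htrace : (A' 0 * E' 0 * ρ).trace = (n : ℂ) := by
      simp only [hA', hE'0]
      rw [Finset.sum_mul, Finset.sum_mul, Matrix.trace_sum]
      have hterm : ∀ k, (M 0 k • A k * E j₀ * ρ).trace = w k * v k := by
        intro k
        rw [smul_mul_assoc, smul_mul_assoc, Matrix.trace_smul, hM0 k]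
        rfl
      rw [Finset.sum_congr rfl fun k _ => hterm k]
      have h1 : ∑ k, w k * v k = (n : ℂ)⁻¹ * ∑ k, (starRingEnd ℂ) (v k) * v k := by
        rw [Finset.mul_sum]
        refine Finset.sum_congr rfl fun k _ => ?_
        simp only [hw, hvE, PiLp.smul_apply, smul_eq_mul, mul_assoc]
      have h2 : ∑ k, (starRingEnd ℂ) (v k) * v k = ((n ^ 2 : ℝ) : ℂ) := by
        rw [hn2]
        push_cast
        refine Finset.sum_congr rfl fun k _ => ?_
        rw [mul_comm, Complex.mul_conj, Complex.normSq_eq_norm_sq]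
        norm_cast
      rw [h1, h2]
      push_cast
      field_simp
    have hden : ((E' 0 * ρ * (E' 0)ᴴ).trace).re = lam j₀ := by rw [hE'0]
    rw [htrace, hden, hLHS]
    have hnn : ‖(n : ℂ)‖ = n := by
      rw [Complex.norm_real, Real.norm_of_nonneg hnpos.le]
    rw [hnn, le_div_iff₀ hj₀pos, hn2, ← hsj₀]
    linarith [hj₀]
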